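/- Let G be a finite group and n a positive integer dividing |G|. Then n divides the cardinality of the set G(n) = {g ∈ G : g^n = 1}. -/

import Mathlib

universe u



/-- The number of solutions of `x ^ k = 1` in `H`. -/
noncomputable def frobCount (H : Type u) [Group H] (k : ℕ) : ℕ := Nat.card {x : H // x ^ k = 1}

lemma frobCount_pos (H : Type u) [Group H] [Finite H] (k : ℕ) : 0 < frobCount H k :=
  haveI : Nonempty {x : H // x ^ k = 1} := ⟨⟨1, one_pow k⟩⟩
  Nat.card_pos (α := {x : H // x ^ k = 1})

lemma frobCount_card (H : Type u) [Group H] [Finite H] :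
    frobCount H (Nat.card H) = Nat.card H :=
  Nat.card_congr (Equiv.subtypeUnivEquiv fun _ => pow_card_eq_one')

lemma frobCount_gcd (H : Type u) [Group H] [Finite H] (k : ℕ) :
    frobCount H k = frobCount H (Nat.gcd k (Nat.card H)) := by
  refine Nat.card_congr (Equiv.subtypeEquivRight fun x => ?_)
  constructor
  · intro hx
    exact orderOf_dvd_iff_pow_eq_one.mp
      (Nat.dvd_gcd (orderOf_dvd_iff_pow_eq_one.mpr hx) (orderOf_dvd_natCard x))
  · intro hx
    exact orderOf_dvd_iff_pow_eq_one.mp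
      ((orderOf_dvd_iff_pow_eq_one.mpr hx).trans (Nat.gcd_dvd_left _ _))

lemma frobCount_subgroup (G : Type u) [Group G] (H : Subgroup G) (k : ℕ) :
    frobCount H k = Nat.card {z : G // z ∈ H ∧ z ^ k = 1} := by
  refine Nat.card_congr ⟨fun x => ⟨x.1.1, x.1.2, ?_⟩, fun z => ⟨⟨z.1, z.2.1⟩, ?_⟩, ?_, ?_⟩
  · have := x.2
    rwa [Subtype.ext_iff, SubmonoidClass.coe_pow] at this
  · rw [Subtype.ext_iff, SubmonoidClass.coe_pow]
    exact z.2.2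
  · intro x; rfl
  · intro z; rfl




lemma zpowers_normal_of_central {H : Type u} [Group H] {y : H}
    (hy : ∀ h : H, h * y = y * h) : (Subgroup.zpowers y).Normal := by
  constructor
  intro a ha g
  obtain ⟨k, rfl⟩ := Subgroup.mem_zpowers_iff.mp ha
  have hc : Commute g y := hy g
  have : g * y ^ k * g⁻¹ = y ^ k := by
    rw [(hc.zpow_right k).eq, mul_assoc, mul_inv_cancel, mul_one]
  rw [this]
  exact Subgroup.mem_zpowers_iff.mpr ⟨k, rfl⟩

lemma frobCount_quotient_central (H : Type u) [Group H] [Finite H] (y : H)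
    (hy : ∀ h : H, h * y = y * h) (u : ℕ) (hco : Nat.Coprime u (orderOf y)) :
    haveI := zpowers_normal_of_central hy
    frobCount H u = frobCount (H ⧸ Subgroup.zpowers y) u := by
  haveI := zpowers_normal_of_central hy
  set Y := Subgroup.zpowers y with hY
  set M := orderOf y with hM
  have hMdvd : ∀ k : ℤ, y ^ (k * u) = 1 → y ^ k = 1 := by
    intro k hk
    rw [← orderOf_dvd_iff_zpow_eq_one, ← hM] at hk ⊢
    have hcop : IsCoprime (M : ℤ) (u : ℤ) :=
      Nat.isCoprime_iff_coprime.mpr (Nat.coprime_comm.mp hco)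
    exact hcop.dvd_of_dvd_mul_right hk
  refine Nat.card_congr (Equiv.ofBijective
    (fun x => ⟨QuotientGroup.mk x.1, by
      rw [← QuotientGroup.mk_pow, x.2, QuotientGroup.mk_one]⟩) ⟨?_, ?_⟩)
  · rintro ⟨x, hx⟩ ⟨x', hx'⟩ h
    simp only [Subtype.mk.injEq] at h ⊢
    rw [QuotientGroup.eq] at h
    obtain ⟨k, hk⟩ := Subgroup.mem_zpowers_iff.mp h
    have hxx' : x' = x * y ^ k := by rw [hk]; group
    have hcomm : Commute x (y ^ k) := Commute.zpow_right (hy x) k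
    have hyk : y ^ (k * u) = 1 := by
      have := hx'
      rw [hxx', hcomm.mul_pow, hx, one_mul, ← zpow_natCast, ← zpow_mul] at this
      exact this
    have : y ^ k = 1 := hMdvd k hyk
    rw [hxx', this, mul_one]
  · rintro ⟨w, hw⟩
    obtain ⟨x₀, rfl⟩ := QuotientGroup.mk_surjective w
    have hx₀ : x₀ ^ u ∈ Y := by
      rw [← QuotientGroup.eq_one_iff, QuotientGroup.mk_pow]
      exact hw
    obtain ⟨k, hk⟩ := Subgroup.mem_zpowers_iff.mp hx₀
    set a := Nat.gcdA u M with ha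
    set t := k * a with ht
    set x := x₀ * y ^ (-t) with hx
    have hcomm : Commute x₀ (y ^ (-t)) := Commute.zpow_right (hy x₀) _
    have hbez : (1 : ℤ) = u * a + M * Nat.gcdB u M := by
      have := Nat.gcd_eq_gcd_ab u M
      rwa [Nat.Coprime.gcd_eq_one hco, Nat.cast_one] at this
    have hxu : x ^ u = 1 := by
      rw [hx, hcomm.mul_pow, ← hk]
      rw [← zpow_natCast (y ^ (-t)), ← zpow_mul, ← zpow_add]
      have : k + -t * u = M * (k * Nat.gcdB u M) := by
        have : t * u = k * (u * a) := by ring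
        have h1 : k + -t * u = k * (1 - u * a) := by ring
        rw [h1]
        have h2 : (1 : ℤ) - u * a = M * Nat.gcdB u M := by omega
        rw [h2]; ring
      rw [this, zpow_mul, zpow_natCast, pow_orderOf_eq_one, one_zpow]
    refine ⟨⟨x, hxu⟩, ?_⟩
    apply Subtype.ext
    show QuotientGroup.mk x = QuotientGroup.mk x₀
    rw [QuotientGroup.eq]
    have hxi : x⁻¹ * x₀ = y ^ t := by rw [hx]; group
    rw [hxi]
    exact Subgroup.mem_zpowers_iff.mpr ⟨t, rfl⟩




section StepA

variable (G : Type u) [Group G] [Finite G] {n p : ℕ} (hp : p.Prime) (hn : n ≠ 0)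

/-- Abbreviation for the data of step A. -/
def frobPairs (M q : ℕ) : Type u :=
  {w : G × G // orderOf w.1 = M ∧ w.2 ∈ Subgroup.centralizer {w.1} ∧ w.2 ^ q = 1}

include hp hn in
lemma frobCount_mul_prime :
    frobCount G (n * p) = frobCount G n +
      Nat.card (frobPairs G (p ^ (n.factorization p + 1)) (n / p ^ n.factorization p)) := by
  classical
  set b := n.factorization p with hb
  set u := n / p ^ b with hu
  set M := p ^ (b + 1) with hM
  have hbu : p ^ b * u = n := Nat.ordProj_mul_ordCompl_eq_self n p
  have hpu : ¬ p ∣ u := Nat.not_dvd_ordCompl hp hn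
  have hu0 : u ≠ 0 := by
    intro h
    rw [h, mul_zero] at hbu
    exact hn hbu.symm
  have hnpMu : n * p = M * u := by rw [hM, ← hbu]; ring
  have hMco : Nat.Coprime M u := Nat.Coprime.pow_left _ (hp.coprime_iff_not_dvd.mpr hpu)
  -- CRT exponent
  obtain ⟨e, he1, he0'⟩ := Nat.chineseRemainder hMco 1 0
  have heu : u ∣ e := Nat.modEq_zero_iff_dvd.mp he0'
  have hM1 : 1 < M := by
    have := hp.one_lt
    calc 1 < p := this
    _ = p ^ 1 := (pow_one p).symm
    _ ≤ p ^ (b + 1) := Nat.pow_le_pow_right hp.pos (by omega)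
  have hpe : ¬ p ∣ e := by
    intro hpe
    have h1 : e ≡ 1 [MOD p] := he1.of_dvd (dvd_pow_self p (Nat.succ_ne_zero b))
    have h0 : e ≡ 0 [MOD p] := Nat.modEq_zero_iff_dvd.mpr hpe
    have : (1 : ℕ) ≡ 0 [MOD p] := h1.symm.trans h0
    have := Nat.modEq_zero_iff_dvd.mp this
    exact hp.one_lt.ne' (Nat.dvd_one.mp this)
  have he0 : e ≠ 0 := by
    intro h
    subst h
    have : (0 : ℕ) % M = 1 % M := he1
    rw [Nat.zero_mod, Nat.mod_eq_of_lt hM1] at this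
    exact one_ne_zero this.symm
  -- split off the new elements
  have hsplit : frobCount G (n * p) = frobCount G n +
      Nat.card {x : G // x ^ (n * p) = 1 ∧ ¬ x ^ n = 1} := by
    rw [frobCount, frobCount, ← Nat.card_sum]
    refine Nat.card_congr ?_
    calc {x : G // x ^ (n * p) = 1} ≃
        {x : {x : G // x ^ (n * p) = 1} // x.1 ^ n = 1} ⊕
        {x : {x : G // x ^ (n * p) = 1} // ¬ x.1 ^ n = 1} :=
          (Equiv.sumCompl fun x : {x : G // x ^ (n * p) = 1} => x.1 ^ n = 1).symm
      _ ≃ {x : G // x ^ n = 1} ⊕ {x : G // x ^ (n * p) = 1 ∧ ¬ x ^ n = 1} := by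
          exact Equiv.sumCongr
            (Equiv.subtypeSubtypeEquivSubtype (p := fun x : G => x ^ (n * p) = 1)
              (q := fun x : G => x ^ n = 1)
              (fun {x} hx => by show x ^ (n * p) = 1; rw [pow_mul, (hx : x ^ n = 1), one_pow]))
            (Equiv.subtypeSubtypeEquivSubtypeInter (fun x : G => x ^ (n * p) = 1)
              (fun x => ¬ x ^ n = 1))
  rw [hsplit]
  congr 1
  -- now the bijection with pairs
  refine Nat.card_congr ⟨fun x => ⟨(x.1 ^ e, x.1 * (x.1 ^ e)⁻¹), ?_⟩,
    fun q => ⟨q.1.1 * q.1.2, ?_⟩, ?_, ?_⟩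
  · obtain ⟨x, hxnp, hxn⟩ := x
    have hxMu : x ^ (M * u) = 1 := by rw [← hnpMu]; exact hxnp
    have hdMu : orderOf x ∣ M * u := orderOf_dvd_iff_pow_eq_one.mpr hxMu
    have hd0 : orderOf x ≠ 0 := (orderOf_pos x).ne'
    have hxeM : (x ^ e) ^ M = 1 := by
      rw [← pow_mul, ← orderOf_dvd_iff_pow_eq_one]
      calc orderOf x ∣ M * u := hdMu
        _ ∣ e * M := by
            obtain ⟨c, rfl⟩ := heu
            exact ⟨c, by ring⟩
    have hxepb : ¬ (x ^ e) ^ (p ^ b) = 1 := by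
      intro hzero
      apply hxn
      rw [← pow_mul, ← orderOf_dvd_iff_pow_eq_one] at hzero
      rw [← orderOf_dvd_iff_pow_eq_one, ← hbu]
      -- orderOf x ∣ M * u and ∣ e * p ^ b implies ∣ p ^ b * u
      have hpb0 : (p : ℕ) ^ b ≠ 0 := pow_ne_zero b hp.pos.ne'
      have hM0 : M ≠ 0 := pow_ne_zero _ hp.pos.ne'
      have h1 : (orderOf x).factorization ≤ ((p ^ b) * u).factorization := by
        rw [Nat.factorization_mul hpb0 hu0]
        intro ℓ
        by_cases hℓ : ℓ = p
        · subst hℓ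
          have h2 := (Nat.factorization_le_iff_dvd hd0 (Nat.mul_ne_zero he0 hpb0)).mpr hzero ℓ
          rw [Nat.factorization_mul he0 hpb0] at h2
          simp only [Finsupp.add_apply, hp.factorization_pow, Finsupp.single_apply,
            if_pos rfl, Nat.factorization_eq_zero_of_not_dvd hpe] at h2 ⊢
          omega
        · have h2 := (Nat.factorization_le_iff_dvd hd0 (Nat.mul_ne_zero hM0 hu0)).mpr hdMu ℓ
          rw [Nat.factorization_mul hM0 hu0] at h2
          simp only [Finsupp.add_apply, hM, hp.factorization_pow, Finsupp.single_apply,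
            if_neg (Ne.symm hℓ)] at h2 ⊢
          omega
      exact (Nat.factorization_le_iff_dvd hd0 (Nat.mul_ne_zero hpb0 hu0)).mp h1
    have hordM : orderOf (x ^ e) = M := by
      have hdvd : orderOf (x ^ e) ∣ p ^ (b + 1) := orderOf_dvd_iff_pow_eq_one.mpr hxeM
      obtain ⟨i, hi, hord⟩ := (Nat.dvd_prime_pow hp).mp hdvd
      have : i = b + 1 := by
        by_contra hib
        exact hxepb (orderOf_dvd_iff_pow_eq_one.mp
          (hord ▸ pow_dvd_pow p (by omega : i ≤ b)))
      rw [hord, this]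
    refine ⟨hordM, ?_, ?_⟩
    · rw [Subgroup.mem_centralizer_iff]
      rintro h ⟨rfl⟩
      have c1 : Commute x (x ^ e) := Commute.pow_right rfl e
      have : Commute (x ^ e) (x * (x ^ e)⁻¹) := (c1.symm.mul_right (Commute.refl _).inv_right)
      exact this.eq
    · -- (x * (x ^ e)⁻¹) ^ u = 1
      have c1 : Commute x (x ^ e)⁻¹ := (Commute.pow_right rfl e).inv_right
      rw [c1.mul_pow, inv_pow, ← pow_mul]
      have : x ^ (e * u) = x ^ u := by
        rw [pow_eq_pow_iff_modEq]
        have h1 : e * u ≡ 1 * u [MOD M * u] := he1.mul_right' u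
        rw [one_mul] at h1
        exact h1.of_dvd (orderOf_dvd_iff_pow_eq_one.mpr hxMu)
      rw [this, mul_inv_cancel]
  · obtain ⟨⟨y, z⟩, hy, hzc, hzu⟩ := q
    have hcyz : Commute y z := (Subgroup.mem_centralizer_iff.mp hzc y rfl)
    constructor
    · rw [hnpMu, hcyz.mul_pow]
      have h1 : y ^ (M * u) = 1 := by
        rw [pow_mul, ← hy, pow_orderOf_eq_one, one_pow]
      have h2 : z ^ (M * u) = 1 := by
        rw [mul_comm, pow_mul, hzu, one_pow]
      rw [h1, h2, one_mul]
    · intro hxn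
      rw [hcyz.mul_pow] at hxn
      have hzn : z ^ n = 1 := by
        rw [← hbu, mul_comm, pow_mul, hzu, one_pow]
      rw [hzn, mul_one, ← orderOf_dvd_iff_pow_eq_one, hy] at hxn
      rw [← hbu] at hxn
      have : p ∣ u := by
        have h2 : p ^ b * p ∣ p ^ b * u := by
          rw [← pow_succ]; exact hxn
        exact (mul_dvd_mul_iff_left (pow_ne_zero b hp.pos.ne' : p ^ b ≠ 0)).mp h2
      exact hpu this
  · rintro ⟨x, hxnp, hxn⟩
    apply Subtype.ext
    have c1 : Commute (x ^ e) x := Commute.pow_left rfl e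
    show x ^ e * (x * (x ^ e)⁻¹) = x
    rw [← mul_assoc, c1.eq, mul_assoc, mul_inv_cancel, mul_one]
  · rintro ⟨⟨y, z⟩, hy, hzc, hzu⟩
    apply Subtype.ext
    have hcyz : Commute y z := (Subgroup.mem_centralizer_iff.mp hzc y rfl)
    have hye : (y * z) ^ e = y := by
      rw [hcyz.mul_pow]
      have hze : z ^ e = 1 := by
        obtain ⟨c, hc⟩ := heu
        rw [hc, pow_mul, (hzu : z ^ u = 1), one_pow]
      rw [hze, mul_one]
      conv_rhs => rw [← pow_one y]
      rw [pow_eq_pow_iff_modEq, hy]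
      exact he1
    show ((y * z) ^ e, y * z * ((y * z) ^ e)⁻¹) = (y, z)
    rw [hye]
    have h3 : y * z * y⁻¹ = z := by
      rw [hcyz.eq, mul_assoc, mul_inv_cancel, mul_one]
    rw [h3]

lemma frobPairs_card_dvd (G : Type u) [Group G] [Finite G] {p b u : ℕ} (hp : p.Prime)
    (hpu : ¬ p ∣ u) (hu0 : u ≠ 0) (hug : u ∣ Nat.card G)
    (IH : ∀ (H : Type u) [Group H] [Finite H], Nat.card H < Nat.card G →
      ∀ k, k ∣ Nat.card H → k ∣ frobCount H k) :
    p ^ b * u ∣ Nat.card (frobPairs G (p ^ (b + 1)) u) := by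
  classical
  set M := p ^ (b + 1) with hM
  haveI : NeZero M := ⟨pow_ne_zero _ hp.pos.ne'⟩
  have hM1 : 1 < M := by
    calc 1 < p := hp.one_lt
    _ = p ^ 1 := (pow_one p).symm
    _ ≤ p ^ (b + 1) := Nat.pow_le_pow_right hp.pos (by omega)
  haveI : Fact (1 < M) := ⟨hM1⟩
  set Φ := Nat.totient M with hΦ
  have hΦ_eq : Φ = p ^ b * (p - 1) := by
    rw [hΦ, hM, Nat.totient_prime_pow hp (Nat.succ_pos b)]
    norm_num
  -- the type of elements of order M
  set X := {y : G // orderOf y = M} with hX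
  -- the acting group
  set K := G × (ZMod M)ˣ with hK
  -- order of twisted conjugates
  have hconjord : ∀ (g w : G), orderOf (g * w * g⁻¹) = orderOf w := fun g w =>
    (SemiconjBy.orderOf_eq g (by unfold SemiconjBy; group)).symm
  have keyord : ∀ (g y : G), orderOf y = M → ∀ v : ℕ, Nat.Coprime M v →
      orderOf ((g * y * g⁻¹) ^ v) = M := by
    intro g y hy v hv
    have : (orderOf (g * y * g⁻¹)).Coprime v := by rw [hconjord, hy]; exact hv
    rw [Nat.Coprime.orderOf_pow this, hconjord, hy]
  -- the action
  letI act : MulAction K X :=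
    { smul := fun gk y => ⟨(gk.1 * y.1 * gk.1⁻¹) ^ ((gk.2 : ZMod M).val),
        keyord gk.1 y.1 y.2 _ (Nat.coprime_comm.mp (ZMod.val_coe_unit_coprime gk.2))⟩
      one_smul := fun y => by
        apply Subtype.ext
        show (1 * y.1 * 1⁻¹) ^ ((1 : (ZMod M)ˣ) : ZMod M).val = y.1
        rw [one_mul, inv_one, mul_one, Units.val_one, ZMod.val_one M, pow_one]
      mul_smul := fun a c y => by
        apply Subtype.ext
        show (((a.1 * c.1) * y.1 * (a.1 * c.1)⁻¹) ^ ((a.2 * c.2 : (ZMod M)ˣ) : ZMod M).val : G)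
          = (a.1 * ((c.1 * y.1 * c.1⁻¹) ^ (c.2 : ZMod M).val) * a.1⁻¹) ^ (a.2 : ZMod M).val
        conv_rhs => rw [conj_pow, ← pow_mul, ← conj_pow (a := a.1)]
        have hw : a.1 * (c.1 * y.1 * c.1⁻¹) * a.1⁻¹ = (a.1 * c.1) * y.1 * (a.1 * c.1)⁻¹ := by
          group
        rw [hw, pow_eq_pow_iff_modEq, hconjord, y.2]
        have : ((a.2 * c.2 : (ZMod M)ˣ) : ZMod M).val
            = ((a.2 : ZMod M).val * (c.2 : ZMod M).val) % M := by
          rw [Units.val_mul, ZMod.val_mul]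
        rw [this, mul_comm ((c.2 : ZMod M).val)]
        exact Nat.mod_modEq _ M
      }
  -- the smul formula
  have smul_def : ∀ (gk : K) (y : X),
      (gk • y).1 = (gk.1 * y.1 * gk.1⁻¹) ^ (gk.2 : ZMod M).val := fun _ _ => rfl
  -- the counting function
  set F : X → ℕ := fun y => Nat.card {z : G // z ∈ Subgroup.centralizer {y.1} ∧ z ^ u = 1}
    with hF
  -- centralizer invariances
  have cent_pow : ∀ (w : G), orderOf w = M → ∀ v : ℕ, Nat.Coprime M v →
      Subgroup.centralizer {w ^ v} = Subgroup.centralizer {w} := by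
    intro w hw v hv
    apply le_antisymm
    · intro z hz
      rw [Subgroup.mem_centralizer_iff] at hz ⊢
      intro h hh
      rw [show h = w from hh]
      -- w is a power of w ^ v
      have hvs : w ^ (v * (v ^ (Φ - 1))) = w := by
        have hΦpos : 0 < Φ := by
          rw [hΦ]; exact Nat.totient_pos.mpr (by omega)
        have hstep : v * v ^ (Φ - 1) = v ^ Φ := by
          rw [← pow_succ']
          congr 1
          omega
        rw [hstep]
        have hmod : v ^ Φ ≡ 1 [MOD M] := Nat.ModEq.pow_totient hv.symm
        conv_rhs => rw [← pow_one w]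
        rw [pow_eq_pow_iff_modEq, hw]
        exact hmod
      have h2 := hz (w ^ v) rfl
      calc w * z = w ^ (v * v ^ (Φ - 1)) * z := by rw [hvs]
        _ = (w ^ v) ^ (v ^ (Φ - 1)) * z := by rw [pow_mul]
        _ = z * (w ^ v) ^ (v ^ (Φ - 1)) := (Commute.pow_left h2 _).eq
        _ = z * w := by rw [← pow_mul, hvs]
    · intro z hz
      rw [Subgroup.mem_centralizer_iff] at hz ⊢
      intro h hh
      rw [show h = w ^ v from hh]
      exact (Commute.pow_left (hz w rfl) v).eq
  have cent_conj : ∀ (g w z : G), (z ∈ Subgroup.centralizer {g * w * g⁻¹} ↔ 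
      g⁻¹ * z * g ∈ Subgroup.centralizer {w}) := by
    intro g w z
    rw [Subgroup.mem_centralizer_iff, Subgroup.mem_centralizer_iff]
    constructor
    · intro h h' hh'
      rcases hh' with rfl
      have := h (g * h' * g⁻¹) rfl
      have h2 : g * (h' * (g⁻¹ * z * g)) * g⁻¹ = g * ((g⁻¹ * z * g) * h') * g⁻¹ := by
        calc g * (h' * (g⁻¹ * z * g)) * g⁻¹ = (g * h' * g⁻¹) * z := by group
        _ = z * (g * h' * g⁻¹) := this
        _ = g * ((g⁻¹ * z * g) * h') * g⁻¹ := by group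
      exact mul_left_cancel (mul_right_cancel h2)
    · intro h h' hh'
      rcases hh' with rfl
      have := h w rfl
      calc (g * w * g⁻¹) * z = g * (w * (g⁻¹ * z * g)) * g⁻¹ := by group
      _ = g * ((g⁻¹ * z * g) * w) * g⁻¹ := by rw [this]
      _ = z * (g * w * g⁻¹) := by group
  -- F is invariant under the action
  have hFinv : ∀ (gk : K) (y : X), F (gk • y) = F y := by
    intro gk y
    rw [hF]
    refine Nat.card_congr ⟨fun z => ⟨gk.1⁻¹ * z.1 * gk.1, ?_, ?_⟩,
      fun z => ⟨gk.1 * z.1 * gk.1⁻¹, ?_, ?_⟩, ?_, ?_⟩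
    · have hz : z.1 ∈ Subgroup.centralizer
          {(gk.1 * y.1 * gk.1⁻¹) ^ ((gk.2 : ZMod M).val)} := z.2.1
      rw [cent_pow _ ((hconjord gk.1 y.1).trans y.2) _
        (Nat.coprime_comm.mp (ZMod.val_coe_unit_coprime gk.2))] at hz
      exact (cent_conj gk.1 y.1 z.1).mp hz
    · have hz := z.2.2
      have h2 : (gk.1⁻¹ * z.1 * gk.1) ^ u = gk.1⁻¹ * z.1 ^ u * (gk.1⁻¹)⁻¹ := by
        rw [← conj_pow (a := gk.1⁻¹), inv_inv]
      rw [h2, hz, mul_one, inv_inv, inv_mul_cancel]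
    · show gk.1 * z.1 * gk.1⁻¹ ∈ Subgroup.centralizer
          {(gk.1 * y.1 * gk.1⁻¹) ^ ((gk.2 : ZMod M).val)}
      rw [cent_pow _ ((hconjord gk.1 y.1).trans y.2) _
        (Nat.coprime_comm.mp (ZMod.val_coe_unit_coprime gk.2))]
      refine (cent_conj gk.1 y.1 _).mpr ?_
      have hsimp : gk.1⁻¹ * (gk.1 * z.1 * gk.1⁻¹) * gk.1 = z.1 := by group
      rw [hsimp]
      exact z.2.1
    · have hz := z.2.2
      rw [conj_pow, hz, mul_one, mul_inv_cancel]
    · intro z; apply Subtype.ext; show gk.1 * (gk.1⁻¹ * z.1 * gk.1) * gk.1⁻¹ = z.1; group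
    · intro z; apply Subtype.ext; show gk.1⁻¹ * (gk.1 * z.1 * gk.1⁻¹) * gk.1 = z.1; group
  -- decompose the pair count as a sum over X
  letI : Fintype X := Fintype.ofFinite X
  have hcard_pairs : Nat.card (frobPairs G M u) = ∑ y : X, F y := by
    have e1 : frobPairs G M u ≃
        (Σ y : X, {z : G // z ∈ Subgroup.centralizer {y.1} ∧ z ^ u = 1}) :=
      { toFun := fun w => ⟨⟨w.1.1, w.2.1⟩, ⟨w.1.2, w.2.2.1, w.2.2.2⟩⟩
        invFun := fun s => ⟨(s.1.1, s.2.1), s.1.2, s.2.2.1, s.2.2.2⟩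
        left_inv := fun w => rfl
        right_inv := fun s => rfl }
    rw [Nat.card_congr e1]
    letI : ∀ y : X, Fintype {z : G // z ∈ Subgroup.centralizer {y.1} ∧ z ^ u = 1} :=
      fun y => Fintype.ofFinite _
    rw [Nat.card_eq_fintype_card, Fintype.card_sigma]
    exact Finset.sum_congr rfl fun y _ => Nat.card_eq_fintype_card.symm
  rw [hcard_pairs]
  -- group the sum by orbits
  letI : Fintype (MulAction.orbitRel.Quotient K X) := Fintype.ofFinite _
  have hsum : ∑ y : X, F y = ∑ ω : MulAction.orbitRel.Quotient K X,
      ∑ y : {y : X // Quotient.mk'' y = ω}, F y.1 :=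
    (Fintype.sum_fiberwise _ _).symm
  rw [hsum]
  refine Finset.dvd_sum fun ω _ => ?_
  set y₀ : X := Quotient.out ω with hy₀
  have hconst : ∀ y : {y : X // Quotient.mk'' y = ω}, F y.1 = F y₀ := by
    intro y
    have hqq : (Quotient.mk'' y.1 : MulAction.orbitRel.Quotient K X) = Quotient.mk'' y₀ := by
      rw [y.2, hy₀, Quotient.out_eq']
    have hrel : MulAction.orbitRel K X y.1 y₀ := Quotient.exact' hqq
    obtain ⟨gk, hgk⟩ := MulAction.orbitRel_apply.mp hrel
    rw [← hgk, hFinv]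
  rw [Finset.sum_congr rfl fun y _ => hconst y, Finset.sum_const, smul_eq_mul,
    Finset.card_univ]
  have hfiber : Fintype.card {y : X // Quotient.mk'' y = ω}
      = Nat.card (MulAction.orbit K y₀) := by
    rw [← Nat.card_eq_fintype_card]
    refine Nat.card_congr (Equiv.subtypeEquivRight fun y => ?_)
    constructor
    · intro h
      exact MulAction.orbitRel_apply.mp
        (Quotient.exact' (h.trans (hy₀ ▸ (Quotient.out_eq' ω).symm)))
    · intro h
      have h2 : (Quotient.mk'' y : MulAction.orbitRel.Quotient K X) = Quotient.mk'' y₀ :=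
        Quotient.sound' (MulAction.orbitRel_apply.mpr h)
      rw [h2, hy₀, Quotient.out_eq']
  rw [hfiber]
  -- orbit stabilizer
  set S := MulAction.stabilizer K y₀ with hS
  have horb : Nat.card (MulAction.orbit K y₀) * Nat.card S = Nat.card K := by
    rw [Nat.card_congr (MulAction.orbitEquivQuotientStabilizer K y₀)]
    exact (Subgroup.card_eq_card_quotient_mul_card_subgroup S).symm
  have hcardK : Nat.card K = Nat.card G * Φ := by
    rw [hK, Nat.card_prod]
    congr 1
    rw [Nat.card_eq_fintype_card, ZMod.card_units_eq_totient]
  -- the centralizer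
  set C := Subgroup.centralizer ({y₀.1} : Set G) with hC
  have conj1 : ∀ gg : G, gg * y₀.1 * gg⁻¹ = y₀.1 ↔ gg ∈ C := by
    intro gg
    constructor
    · intro h
      rw [hC, Subgroup.mem_centralizer_iff]
      intro h' hh'
      rw [show h' = y₀.1 from hh']
      have := mul_inv_eq_iff_eq_mul.mp h
      exact this.symm
    · intro h
      have h4 := Subgroup.mem_centralizer_iff.mp h y₀.1 rfl
      rw [← h4]
      group
  have stab_iff : ∀ gk : K, gk ∈ S ↔
      (gk.1 * y₀.1 * gk.1⁻¹) ^ ((gk.2 : ZMod M).val) = y₀.1 := by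
    intro gk
    rw [hS, MulAction.mem_stabilizer_iff]
    exact Subtype.ext_iff
  set π₂ : S →* (ZMod M)ˣ := (MonoidHom.snd G (ZMod M)ˣ).comp S.subtype with hπ₂
  have hker : Nat.card π₂.ker = Nat.card C := by
    have toC : ∀ s : π₂.ker, s.1.1.1 ∈ C := by
      intro s
      have hk1 : s.1.1.2 = 1 := MonoidHom.mem_ker.mp s.2
      have hst := (stab_iff s.1.1).mp s.1.2
      rw [hk1, Units.val_one, ZMod.val_one M, pow_one] at hst
      exact (conj1 _).mp hst
    have memS : ∀ z : C, ((z.1, 1) : K) ∈ S := by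
      intro z
      refine (stab_iff _).mpr ?_
      show (z.1 * y₀.1 * z.1⁻¹) ^ ((1 : (ZMod M)ˣ) : ZMod M).val = y₀.1
      rw [Units.val_one, ZMod.val_one M, pow_one]
      exact (conj1 _).mpr z.2
    refine Nat.card_congr ⟨fun s => ⟨s.1.1.1, toC s⟩,
      fun z => ⟨⟨((z.1, 1) : K), memS z⟩, MonoidHom.mem_ker.mpr rfl⟩, ?_, ?_⟩
    · intro s
      apply Subtype.ext; apply Subtype.ext
      exact Prod.ext rfl (MonoidHom.mem_ker.mp s.2 : s.1.1.2 = 1).symm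
    · intro z
      rfl
  have hSrc : Nat.card S = Nat.card π₂.range * Nat.card C := by
    rw [Subgroup.card_eq_card_quotient_mul_card_subgroup π₂.ker, hker]
    congr 1
    exact Nat.card_congr (QuotientGroup.quotientKerEquivRange π₂).toEquiv
  have hrΦ : Nat.card π₂.range ∣ Φ := by
    have h2 : Nat.card (ZMod M)ˣ = Φ := by
      rw [Nat.card_eq_fintype_card, ZMod.card_units_eq_totient]
    have h1 := Subgroup.card_subgroup_dvd_card π₂.range
    rwa [h2] at h1
  have hSG : Nat.card S ∣ Nat.card G := by
    set π₁ : S →* G := (MonoidHom.fst G (ZMod M)ˣ).comp S.subtype with hπ₁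
    have hinj : Function.Injective π₁ := by
      intro s t h
      have h1 : s.1.1 = t.1.1 := h
      apply Subtype.ext
      apply Prod.ext h1
      -- same unit
      have hs := (stab_iff s.1).mp s.2
      have ht := (stab_iff t.1).mp t.2
      rw [h1] at hs
      have hs2 := hs.trans ht.symm
      rw [pow_eq_pow_iff_modEq, hconjord, y₀.2] at hs2
      have hlt1 : ((s.1.2 : ZMod M)).val < M := ZMod.val_lt _
      have hlt2 : ((t.1.2 : ZMod M)).val < M := ZMod.val_lt _
      have hveq : ((s.1.2 : ZMod M)).val = ((t.1.2 : ZMod M)).val := by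
        unfold Nat.ModEq at hs2
        rwa [Nat.mod_eq_of_lt hlt1, Nat.mod_eq_of_lt hlt2] at hs2
      exact Units.ext (ZMod.val_injective M hveq)
    have h2 : Nat.card S = Nat.card π₁.range :=
      Nat.card_congr (MonoidHom.ofInjective hinj).toEquiv
    rw [h2]
    exact Subgroup.card_subgroup_dvd_card π₁.range
  -- divisibility of F y₀ by gcd u c
  set c := Nat.card C with hc
  set u' := Nat.gcd u c with hu'
  have hFeq : F y₀ = frobCount C u := (frobCount_subgroup G C u).symm
  have hu'F : u' ∣ F y₀ := by
    have ystar_mem : y₀.1 ∈ C := by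
      rw [hC, Subgroup.mem_centralizer_iff]
      intro h' hh'
      rw [show h' = y₀.1 from hh']
    set ystar : C := ⟨y₀.1, ystar_mem⟩ with hystar
    have hcen : ∀ h : C, h * ystar = ystar * h := by
      intro h
      apply Subtype.ext
      exact (Subgroup.mem_centralizer_iff.mp h.2 y₀.1 rfl).symm
    have hordy : orderOf ystar = M :=
      ((orderOf_injective C.subtype C.subtype_injective ystar).symm).trans y₀.2
    have hpu' : ¬ p ∣ u' := fun hd => hpu (hd.trans (Nat.gcd_dvd_left u c))
    have hco' : Nat.Coprime u' (orderOf ystar) := by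
      rw [hordy, hM]
      exact Nat.Coprime.pow_right _ (Nat.coprime_comm.mp (hp.coprime_iff_not_dvd.mpr hpu'))
    haveI hnorm := zpowers_normal_of_central hcen
    have hquot := frobCount_quotient_central C ystar hcen u' hco'
    have hcardC : Nat.card C = Nat.card (C ⧸ Subgroup.zpowers ystar) * M := by
      rw [Subgroup.card_eq_card_quotient_mul_card_subgroup (Subgroup.zpowers ystar),
        Nat.card_zpowers, hordy]
    have hqpos : 0 < Nat.card (C ⧸ Subgroup.zpowers ystar) := Nat.card_pos
    have hsmall : Nat.card (C ⧸ Subgroup.zpowers ystar) < Nat.card G := by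
      have hCle : Nat.card C ≤ Nat.card G :=
        Nat.le_of_dvd Nat.card_pos (Subgroup.card_subgroup_dvd_card C)
      have h3 : Nat.card (C ⧸ Subgroup.zpowers ystar) < Nat.card C := by
        rw [hcardC]
        exact (Nat.lt_mul_iff_one_lt_right hqpos).mpr hM1
      omega
    have hdvdq : u' ∣ Nat.card (C ⧸ Subgroup.zpowers ystar) := by
      have h1 : u' ∣ Nat.card C := Nat.gcd_dvd_right u c
      rw [hcardC] at h1
      have hcop : Nat.Coprime u' M := by rw [← hordy]; exact hco'
      exact hcop.dvd_of_dvd_mul_right h1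
    have hIH := IH (C ⧸ Subgroup.zpowers ystar) hsmall u' hdvdq
    rw [hFeq, frobCount_gcd C u, ← hc, ← hu', hquot]
    exact hIH
  -- endgame arithmetic
  set gcard := Nat.card G with hgcard
  set o := Nat.card (MulAction.orbit K y₀) with ho
  set r := Nat.card π₂.range with hr
  have h_orc : o * (r * c) = gcard * Φ := by rw [← hSrc, horb, hcardK]
  have hF0pos : 0 < F y₀ := by
    rw [hFeq]; exact frobCount_pos C u
  have hrpos : 0 < r := Nat.card_pos
  have hcpos : 0 < c := Nat.card_pos
  have hgpos : 0 < gcard := Nat.card_pos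
  have hΦpos : 0 < Φ := by rw [hΦ]; exact Nat.totient_pos.mpr (by omega)
  have hupos : 0 < u := Nat.pos_of_ne_zero hu0
  -- main factorization estimate
  have hrc_g : r * c ∣ gcard := by rw [← hSrc]; exact hSG
  have main : (p ^ b * u) * (r * c) ∣ (gcard * Φ) * F y₀ := by
    have hpb0 : (p : ℕ) ^ b ≠ 0 := pow_ne_zero b hp.pos.ne'
    have hA : p ^ b * u ≠ 0 := Nat.mul_ne_zero hpb0 hu0
    have hB : r * c ≠ 0 := Nat.mul_ne_zero hrpos.ne' hcpos.ne'
    have hGΦ : gcard * Φ ≠ 0 := Nat.mul_ne_zero hgpos.ne' hΦpos.ne'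
    have hne1 : (p ^ b * u) * (r * c) ≠ 0 := Nat.mul_ne_zero hA hB
    have hne2 : (gcard * Φ) * F y₀ ≠ 0 := Nat.mul_ne_zero hGΦ hF0pos.ne'
    rw [← Nat.factorization_le_iff_dvd hne1 hne2]
    intro ℓ
    have e1 : ((p ^ b * u) * (r * c)).factorization ℓ
        = (p ^ b).factorization ℓ + u.factorization ℓ
          + (r.factorization ℓ + c.factorization ℓ) := by
      rw [Nat.factorization_mul hA hB,
        Nat.factorization_mul hpb0 hu0, Nat.factorization_mul hrpos.ne' hcpos.ne']
      rfl
    have e2 : ((gcard * Φ) * F y₀).factorization ℓ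
        = gcard.factorization ℓ + Φ.factorization ℓ + (F y₀).factorization ℓ := by
      rw [Nat.factorization_mul hGΦ hF0pos.ne',
        Nat.factorization_mul hgpos.ne' hΦpos.ne']
      rfl
    rw [e1, e2]
    have a1 : r.factorization ℓ + c.factorization ℓ ≤ gcard.factorization ℓ := by
      have h6 := (Nat.factorization_le_iff_dvd hB hgpos.ne').mpr hrc_g ℓ
      rwa [Nat.factorization_mul hrpos.ne' hcpos.ne'] at h6
    have a2 : u.factorization ℓ ≤ gcard.factorization ℓ :=
      (Nat.factorization_le_iff_dvd hu0 hgpos.ne').mpr hug ℓ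
    have a3 : c.factorization ℓ ≤ gcard.factorization ℓ :=
      (Nat.factorization_le_iff_dvd hcpos.ne' hgpos.ne').mpr
        (Subgroup.card_subgroup_dvd_card C) ℓ
    have a4 : r.factorization ℓ ≤ Φ.factorization ℓ :=
      (Nat.factorization_le_iff_dvd hrpos.ne' hΦpos.ne').mpr hrΦ ℓ
    have a5 : min (u.factorization ℓ) (c.factorization ℓ) ≤ (F y₀).factorization ℓ := by
      have h1 := (Nat.factorization_le_iff_dvd
        (Nat.gcd_ne_zero_left hu0) hF0pos.ne').mpr hu'F ℓ
      rw [Nat.factorization_gcd hu0 hcpos.ne', Finsupp.inf_apply] at h1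
      exact h1
    have hp1ne : p - 1 ≠ 0 := by have := hp.one_lt; omega
    by_cases hℓ : ℓ = p
    · have hvp : (p ^ b).factorization ℓ = b := by
        rw [hp.factorization_pow, Finsupp.single_apply, if_pos hℓ.symm]
      have hvu : u.factorization ℓ = 0 := by
        rw [hℓ]; exact Nat.factorization_eq_zero_of_not_dvd hpu
      have hvΦ : Φ.factorization ℓ = b + (p - 1).factorization ℓ := by
        rw [hΦ_eq, Nat.factorization_mul hpb0 hp1ne,
          Finsupp.add_apply, hp.factorization_pow, Finsupp.single_apply, if_pos hℓ.symm]
      rw [hvp, hvu, hvΦ]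
      omega
    · have hvp : (p ^ b).factorization ℓ = 0 := by
        rw [hp.factorization_pow, Finsupp.single_apply, if_neg (fun h => hℓ h.symm)]
      have hvΦ : Φ.factorization ℓ = (p - 1).factorization ℓ := by
        rw [hΦ_eq, Nat.factorization_mul hpb0 hp1ne,
          Finsupp.add_apply, hp.factorization_pow, Finsupp.single_apply,
          if_neg (fun h => hℓ h.symm)]
        omega
      rw [hvp, hvΦ]
      have a4' : r.factorization ℓ ≤ (p - 1).factorization ℓ := by rw [← hvΦ]; exact a4
      rcases le_total (u.factorization ℓ) (c.factorization ℓ) with hmin | hmin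
      · rw [min_eq_left hmin] at a5
        omega
      · rw [min_eq_right hmin] at a5
        omega
  -- conclude
  have final : (p ^ b * u) * (r * c) ∣ (o * F y₀) * (r * c) := by
    have : (o * F y₀) * (r * c) = (gcard * Φ) * F y₀ := by
      rw [← h_orc]; ring
    rw [this]
    exact main
  exact (Nat.mul_dvd_mul_iff_right (by positivity : 0 < r * c)).mp final



lemma frob_inner (G : Type u) [Group G] [Finite G]
    (IH : ∀ (H : Type u) [Group H] [Finite H], Nat.card H < Nat.card G →
      ∀ k, k ∣ Nat.card H → k ∣ frobCount H k) :
    ∀ (m n : ℕ), Nat.card G = n * m → n ∣ frobCount G n := by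
  intro m
  induction m using Nat.strong_induction_on with
  | _ m ihm =>
    intro n hm
    have hpos : 0 < Nat.card G := Nat.card_pos
    rcases Nat.eq_zero_or_pos m with rfl | hmpos
    · omega
    rcases eq_or_lt_of_le (Nat.succ_le_of_lt hmpos : Nat.succ 0 ≤ m) with hm1 | hm2
    · -- m = 1
      rw [← hm1, Nat.mul_succ, Nat.mul_zero, Nat.zero_add] at hm
      rw [show n = Nat.card G from hm.symm, frobCount_card]
    · -- m ≥ 2
      have hmne1 : m ≠ 1 := by omega
      set P := m.minFac with hP
      have hp : P.Prime := Nat.minFac_prime hmne1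
      have hpm : P ∣ m := Nat.minFac_dvd m
      set m' := m / P with hm'def
      have hmeq : m = P * m' := (Nat.mul_div_cancel' hpm).symm
      have hlt : m' < m := Nat.div_lt_self (by omega) hp.one_lt
      have hm' : Nat.card G = (n * P) * m' := by rw [hm, hmeq]; ring
      have hn0 : n ≠ 0 := by
        intro h
        rw [h, zero_mul] at hm
        omega
      have hnp := ihm m' hlt (n * P) hm'
      set b := n.factorization P with hb
      set u := n / P ^ b with hu
      have hbu : P ^ b * u = n := Nat.ordProj_mul_ordCompl_eq_self n P
      have hu0 : u ≠ 0 := by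
        intro h
        rw [h, mul_zero] at hbu
        exact hn0 hbu.symm
      have hpu : ¬ P ∣ u := Nat.not_dvd_ordCompl hp hn0
      have hug : u ∣ Nat.card G := by
        have h1 : u ∣ n := ⟨P ^ b, by rw [← hbu]; ring⟩
        exact h1.trans (Dvd.intro m hm.symm)
      have hkey := frobCount_mul_prime G hp hn0
      have hB := frobPairs_card_dvd G (b := b) hp hpu hu0 hug IH
      rw [hbu] at hB
      have h1 : n ∣ frobCount G (n * P) := (dvd_mul_right n P).trans hnp
      have h2 : frobCount G n = frobCount G (n * P) - Nat.card
          (frobPairs G (P ^ (n.factorization P + 1)) (n / P ^ n.factorization P)) := by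
        omega
      rw [h2]
      exact Nat.dvd_sub h1 hB

lemma frob_all : ∀ (N : ℕ) (G : Type u) [Group G] [Finite G], Nat.card G ≤ N →
    ∀ n, n ∣ Nat.card G → n ∣ frobCount G n := by
  intro N
  induction N using Nat.strong_induction_on with
  | _ N ihN =>
    intro G _ _ hle n hdvd
    have IH : ∀ (H : Type u) [Group H] [Finite H], Nat.card H < Nat.card G →
        ∀ k, k ∣ Nat.card H → k ∣ frobCount H k := by
      intro H _ _ hlt k hk
      exact ihN (Nat.card H) (lt_of_lt_of_le hlt hle) H le_rfl k hk
    obtain ⟨m, hm⟩ := hdvd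
    exact frob_inner G IH m n hm

/-- Frobenius's divisibility theorem (special case): if `n` divides the order of a
finite group `G`, then `n` divides the number of elements `g` with `g ^ n = 1`. -/
theorem frobenius_divisibility (G : Type*) [Group G] [Fintype G] (n : ℕ) (hn : 0 < n)
    (hdvd : n ∣ Fintype.card G) :
    n ∣ Nat.card {g : G // g ^ n = 1} := by
  have h1 : n ∣ Nat.card G := by rwa [Nat.card_eq_fintype_card]
  exact frob_all (Nat.card G) G le_rfl n h1
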